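/- Lower bound on the first coordinate of leading exponents: let < be a product order on k[X₁,…,Xₙ] and A ⊆ 𝔸ⁿ a variety; for λ ∈ k let A_λ = A ∩ {X₁ = λ} ⊆ 𝔸ⁿ⁻¹. Then for every β ∈ C(A) (leading exponent of some element of I(A)), β₁ ≥ #{λ ∈ k : p(β) ∈ D(A_λ)}; in particular β₁ ≥ Σ_{λ∈𝔸¹} #(p⁻¹(p(β)) ∩ (\{0\}×D(A_λ))). -/

import Mathlib

open MvPolynomial

/-- `β` is the leading exponent of `f` with respect to the monomial order `m`. -/
def IsLeadExp {σ : Type*} {k : Type*} [CommSemiring k] (m : MonomialOrder σ)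
    (f : MvPolynomial σ k) (β : σ →₀ ℕ) : Prop :=
  β ∈ f.support ∧ ∀ α ∈ f.support, α ≠ β → m.toSyn α < m.toSyn β

/-- `C(I)`: the set of leading exponents of nonzero elements of the ideal `I`. -/
def expC {σ : Type*} {k : Type*} [CommSemiring k] (m : MonomialOrder σ)
    (I : Ideal (MvPolynomial σ k)) : Set (σ →₀ ℕ) :=
  {β | ∃ f ∈ I, IsLeadExp m f β}

/-- `D(I)`: the standard set (set of exponents of standard monomials) of the ideal `I`. -/
def expD {σ : Type*} {k : Type*} [CommSemiring k] (m : MonomialOrder σ)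
    (I : Ideal (MvPolynomial σ k)) : Set (σ →₀ ℕ) :=
  (expC m I)ᶜ

/-- The projection `ℕⁿ → ℕⁿ⁻¹` dropping the first coordinate. -/
noncomputable def pr {n : ℕ} (β : Fin (n + 1) →₀ ℕ) : Fin n →₀ ℕ :=
  Finsupp.comapDomain Fin.succ β (Fin.succ_injective n).injOn

/-- The embedding `ℕⁿ⁻¹ → ℕⁿ`, putting `0` in the first coordinate. -/
noncomputable def emb {n : ℕ} (α : Fin n →₀ ℕ) : Fin (n + 1) →₀ ℕ :=
  Finsupp.mapDomain Fin.succ α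

/-- `t` is a *product order* restricting to `tb`: `α < β` iff `p(α) < p(β)`, or
`p(α) = p(β)` and `α₁ < β₁`, where `p` drops the first coordinate. -/
def IsProductOrder {n : ℕ} (t : MonomialOrder (Fin (n + 1)))
    (tb : MonomialOrder (Fin n)) : Prop :=
  ∀ α β : Fin (n + 1) →₀ ℕ,
    (t.toSyn α < t.toSyn β ↔
      (tb.toSyn (pr α) < tb.toSyn (pr β) ∨ (pr α = pr β ∧ α 0 < β 0)))

/-- The fiber `A_λ = A ∩ {X₁ = λ}`, regarded as a subvariety of `𝔸ⁿ⁻¹`. -/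
def fiberAt {k : Type*} {n : ℕ} (A : Set (Fin (n + 1) → k)) (lam : k) :
    Set (Fin n → k) :=
  {y | Fin.cons lam y ∈ A}

/-- `A′` is a `d`-dimensional affine subspace of the affine space with coordinates `ι`. -/
def IsAffineDPlane {k : Type*} [Field k] {ι : Type*} [Fintype ι] (d : ℕ)
    (A' : Set (ι → k)) : Prop :=
  ∃ S : AffineSubspace k (ι → k),
    A' = (S : Set (ι → k)) ∧ A'.Nonempty ∧ Module.finrank k S.direction = d

/-- `{X_j : j ∈ J}` is a set of free variables of `A′`. -/
def IsFreeVars {k : Type*} [Field k] {ι : Type*} (A' : Set (ι → k)) (J : Finset ι) :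
    Prop :=
  ∀ v : ι → k, ∃! x, x ∈ A' ∧ ∀ j ∈ J, x j = v j

/-- `{X_j : j ∈ J}` is the set of *minimal* free variables of `A′`. -/
def IsMinFreeVars {k : Type*} [Field k] {ι : Type*} [LinearOrder ι] [DecidableEq ι]
    (A' : Set (ι → k)) (J : Finset ι) : Prop :=
  IsFreeVars A' J ∧ ∀ j ∈ J, ∀ i ∉ J, i < j → ¬ IsFreeVars A' (insert i (J.erase j))

lemma pr_cons {n : ℕ} (y : ℕ) (s : Fin n →₀ ℕ) : pr (Finsupp.cons y s) = s := by
  ext i; simp [pr, Finsupp.comapDomain_apply, Finsupp.cons_succ]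

lemma cons_pr {n : ℕ} (β : Fin (n + 1) →₀ ℕ) : Finsupp.cons (β 0) (pr β) = β := by
  ext i
  refine Fin.cases ?_ ?_ i
  · simp [Finsupp.cons_zero]
  · intro j; simp [pr, Finsupp.cons_succ, Finsupp.comapDomain_apply]

lemma coeff_evalC {k : Type*} [Field k] {n : ℕ} (Q : Polynomial (MvPolynomial (Fin n) k))
    (lam : k) (α : Fin n →₀ ℕ) :
    (Q.eval (MvPolynomial.C lam)).coeff α =
      ∑ i ∈ Finset.range (Q.natDegree + 1), lam ^ i * (Q.coeff i).coeff α := by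
  conv_lhs => rw [Polynomial.eval_eq_sum_range]
  rw [MvPolynomial.coeff_sum]
  refine Finset.sum_congr rfl fun i _ => ?_
  rw [← MvPolynomial.C_pow, mul_comm, MvPolynomial.coeff_C_mul]

/-- Lower bound on the first coordinate of leading exponents: for a product order and any
variety `A ⊆ 𝔸ⁿ`, every `β ∈ C(A)` satisfies `β₁ ≥ #{λ ∈ k : p(β) ∈ D(A_λ)}` (in
particular this set is finite). -/
theorem first_coordinate_lower_bound {k : Type*} [Field k] {n : ℕ}
    (t : MonomialOrder (Fin (n + 1))) (tb : MonomialOrder (Fin n))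
    (hprod : IsProductOrder t tb)
    (A : Set (Fin (n + 1) → k))
    (β : Fin (n + 1) →₀ ℕ) (hβ : β ∈ expC t (MvPolynomial.vanishingIdeal k A)) :
    {lam : k | pr β ∈ expD tb (MvPolynomial.vanishingIdeal k (fiberAt A lam))}.Finite ∧
      {lam : k | pr β ∈ expD tb (MvPolynomial.vanishingIdeal k (fiberAt A lam))}.ncard ≤
        β 0 := by
  classical
  obtain ⟨f, hfI, hfβ, hflead⟩ := hβ
  set Q := finSuccEquiv k n f with hQ
  set φ : Polynomial k :=
    ∑ i ∈ Finset.range (Q.natDegree + 1),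
      Polynomial.C ((Q.coeff i).coeff (pr β)) * Polynomial.X ^ i with hφ
  have hcoeffβ : f.coeff β ≠ 0 := mem_support_iff.mp hfβ
  have hconsβ : (pr β).cons (β 0) = β := cons_pr β
  have hQβ : (Q.coeff (β 0)).coeff (pr β) ≠ 0 := by
    rw [hQ, finSuccEquiv_coeff_coeff, hconsβ]; exact hcoeffβ
  have hβdeg : β 0 ≤ Q.natDegree :=
    Polynomial.le_natDegree_of_ne_zero (fun h => hQβ (by simp [h]))
  -- coefficients of φ
  have hφc : ∀ j, φ.coeff j = (Q.coeff j).coeff (pr β) := by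
    intro j
    rw [hφ, Polynomial.finset_sum_coeff]
    simp only [Polynomial.coeff_C_mul, Polynomial.coeff_X_pow, mul_ite, mul_one, mul_zero]
    rw [Finset.sum_ite_eq (Finset.range (Q.natDegree + 1)) j
      (fun i => (Q.coeff i).coeff (pr β))]
    split_ifs with h
    · rfl
    · have : Q.natDegree < j := by
        simpa using Nat.lt_of_succ_le (not_lt.mp (fun hc => h (Finset.mem_range.mpr hc)))
      rw [Polynomial.coeff_eq_zero_of_natDegree_lt this, MvPolynomial.coeff_zero]
  have hφne : φ ≠ 0 := fun h => hQβ (by rw [← hφc (β 0), h, Polynomial.coeff_zero])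
  -- degree bound
  have hφdeg : φ.natDegree ≤ β 0 := by
    rw [Polynomial.natDegree_le_iff_coeff_eq_zero]
    intro j hj
    rw [hφc j, hQ, finSuccEquiv_coeff_coeff]
    by_contra hc
    have hmem : (pr β).cons j ∈ f.support := mem_support_iff.mpr hc
    have hne : (pr β).cons j ≠ β := by
      intro h
      have := congrArg (fun γ : Fin (n+1) →₀ ℕ => γ 0) h
      simp only [Finsupp.cons_zero] at this
      omega
    have := (hprod ((pr β).cons j) β).mp (hflead _ hmem hne)
    rcases this with h | ⟨hpr, hlt⟩
    · rw [pr_cons] at h; exact lt_irrefl _ h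
    · rw [Finsupp.cons_zero] at hlt; omega
  -- eval of φ equals coefficient of the substituted polynomial
  have hφeval : ∀ lam : k, φ.eval lam = (Q.eval (MvPolynomial.C lam)).coeff (pr β) := by
    intro lam
    rw [coeff_evalC, hφ, Polynomial.eval_finset_sum]
    refine Finset.sum_congr rfl fun i _ => ?_
    simp only [Polynomial.eval_mul, Polynomial.eval_C, Polynomial.eval_pow, Polynomial.eval_X]
    ring
  -- key claim: fibers with pr β standard give roots of φ
  have key : ∀ lam : k,
      pr β ∈ expD tb (MvPolynomial.vanishingIdeal k (fiberAt A lam)) → φ.eval lam = 0 := by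
    intro lam hlam
    by_contra h0
    apply hlam
    refine ⟨Q.eval (MvPolynomial.C lam), ?_, ?_, ?_⟩
    · rw [mem_vanishingIdeal_iff]
      intro y hy
      have h1 : (MvPolynomial.eval y) (Q.eval (MvPolynomial.C lam)) =
          Q.eval₂ (MvPolynomial.eval y) lam := by
        have h2 := Polynomial.eval₂_hom
          (MvPolynomial.eval y : MvPolynomial (Fin n) k →+* k) (MvPolynomial.C lam) (p := Q)
        simpa using h2.symm
      change (MvPolynomial.eval y) (Q.eval (MvPolynomial.C lam)) = 0
      rw [h1, ← Polynomial.eval_map, hQ, ← eval_eq_eval_mv_eval']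
      exact (mem_vanishingIdeal_iff.mp hfI) _ hy
    · rw [mem_support_iff, ← hφeval]; exact h0
    · intro α hα hne
      have hα' : (Q.eval (MvPolynomial.C lam)).coeff α ≠ 0 := mem_support_iff.mp hα
      rw [coeff_evalC] at hα'
      obtain ⟨i, _, hi⟩ := Finset.exists_ne_zero_of_sum_ne_zero hα'
      have hfc : f.coeff (α.cons i) ≠ 0 := by
        rw [← finSuccEquiv_coeff_coeff, ← hQ]
        intro h; rw [h, mul_zero] at hi; exact hi rfl
      have hmem : α.cons i ∈ f.support := mem_support_iff.mpr hfc
      have hneβ : α.cons i ≠ β := by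
        intro h
        apply hne
        have := congrArg pr h
        rwa [pr_cons] at this
      have := (hprod (α.cons i) β).mp (hflead _ hmem hneβ)
      rcases this with h | ⟨hpr, _⟩
      · rwa [pr_cons] at h
      · rw [pr_cons] at hpr; exact absurd hpr hne
  -- conclude via roots of φ
  have hsub : {lam : k | pr β ∈ expD tb (MvPolynomial.vanishingIdeal k (fiberAt A lam))} ⊆
      ↑φ.roots.toFinset := by
    intro lam hlam
    simp only [Finset.coe_sort_coe, Multiset.mem_toFinset, Finset.mem_coe,
      Polynomial.mem_roots']
    exact ⟨hφne, key lam hlam⟩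
  have hfin := Set.Finite.subset (φ.roots.toFinset : Finset k).finite_toSet hsub
  refine ⟨hfin, ?_⟩
  calc {lam : k | pr β ∈ expD tb (MvPolynomial.vanishingIdeal k (fiberAt A lam))}.ncard
      ≤ (↑φ.roots.toFinset : Set k).ncard :=
        Set.ncard_le_ncard hsub (φ.roots.toFinset : Finset k).finite_toSet
    _ = φ.roots.toFinset.card := Set.ncard_coe_finset _
    _ ≤ Multiset.card φ.roots := Multiset.toFinset_card_le _
    _ ≤ φ.natDegree := Polynomial.card_roots' φ
    _ ≤ β 0 := hφdeg
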